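/- Let V be a Hilbert space, A: V → V* linear, bounded with constant C_b and coercive with constant C_a > 0. Let Φ: V → V be increasing and satisfy ‖Φ(v)‖ ≤ C_X ‖v‖ for all v with C_X < C_a/C_b. Suppose {yₙ} is a sequence with yₙ ≤ yₙ₋₁ (decreasing) where each yₙ solves the variational inequality: yₙ ≤ Φ(yₙ₋₁) and ⟨A yₙ − f, yₙ − v⟩ ≤ 0 for all v ≤ Φ(yₙ₋₁). Then {yₙ} is bounded in V: specifically C_a‖yₙ‖² ≤ C_b C_X‖yₙ‖² + (1 + C_X)‖f‖_{V*}‖yₙ‖ and hence ‖yₙ‖ ≤ (1+C_X)‖f‖_{V*}/(C_a − C_b C_X). -/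

import Mathlib

/-- uniform bound for the decreasing iterates of the QVI iteration
scheme, under the smallness condition `C_X < C_a / C_b` on the obstacle map. -/
theorem iterates_bounded
    {V : Type*} [NormedAddCommGroup V] [InnerProductSpace ℝ V] [CompleteSpace V]
    (P : Set V) (hPclosed : IsClosed P)
    (A : V →L[ℝ] V →L[ℝ] ℝ) (Ca Cb CX : ℝ) (hCa : 0 < Ca) (hCb : 0 < Cb)
    (hbound : ∀ u v : V, A u v ≤ Cb * ‖u‖ * ‖v‖)
    (hcoerc : ∀ u : V, Ca * ‖u‖ ^ 2 ≤ A u u)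
    (Φ : V → V)
    (hΦmono : ∀ u v : V, v - u ∈ P → Φ v - Φ u ∈ P)
    (hΦnorm : ∀ v : V, ‖Φ v‖ ≤ CX * ‖v‖) (hCX : CX < Ca / Cb)
    (f : V →L[ℝ] ℝ) (y : ℕ → V)
    (hdec : ∀ n, y n - y (n + 1) ∈ P)
    (hVI : ∀ n, Φ (y n) - y (n + 1) ∈ P ∧
      ∀ v : V, Φ (y n) - v ∈ P → (A (y (n + 1)) - f) (y (n + 1) - v) ≤ 0) :
    ∀ n, Ca * ‖y (n + 1)‖ ^ 2 ≤
        Cb * CX * ‖y (n + 1)‖ ^ 2 + (1 + CX) * ‖f‖ * ‖y (n + 1)‖ ∧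
      ‖y (n + 1)‖ ≤ (1 + CX) * ‖f‖ / (Ca - Cb * CX) := by
  intro n
  set z := y (n + 1) with hz
  set w := Φ z with hw
  have hCbCX : Cb * CX < Ca := by
    have := (lt_div_iff₀ hCb).mp hCX; linarith
  -- variational inequality with test function w = Φ(y (n+1))
  have hadm : Φ (y n) - w ∈ P := hΦmono z (y n) (hdec n)
  have hineq := (hVI n).2 w hadm
  have hexp : A z z ≤ A z w + f z - f w := by
    have h := hineq
    simp only [ContinuousLinearMap.sub_apply, map_sub] at h
    linarith
  have hfz : f z ≤ ‖f‖ * ‖z‖ := by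
    have h := f.le_opNorm z; rw [Real.norm_eq_abs] at h
    linarith [le_abs_self (f z)]
  have hfw : -f w ≤ ‖f‖ * ‖w‖ := by
    have h := f.le_opNorm w; rw [Real.norm_eq_abs] at h
    linarith [neg_abs_le (f w)]
  have hAzw : A z w ≤ Cb * ‖z‖ * ‖w‖ := hbound z w
  have hwnorm : ‖w‖ ≤ CX * ‖z‖ := hΦnorm z
  have hznn : (0:ℝ) ≤ ‖z‖ := norm_nonneg _
  have hwnn : (0:ℝ) ≤ ‖w‖ := norm_nonneg _
  have hfnn : (0:ℝ) ≤ ‖f‖ := norm_nonneg _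
  have key : Ca * ‖z‖ ^ 2 ≤ Cb * CX * ‖z‖ ^ 2 + (1 + CX) * ‖f‖ * ‖z‖ := by
    have h1 : Ca * ‖z‖ ^ 2 ≤ A z z := hcoerc z
    have h2 : Cb * ‖z‖ * ‖w‖ ≤ Cb * ‖z‖ * (CX * ‖z‖) :=
      mul_le_mul_of_nonneg_left hwnorm (by positivity)
    have h3 : ‖f‖ * ‖w‖ ≤ ‖f‖ * (CX * ‖z‖) :=
      mul_le_mul_of_nonneg_left hwnorm hfnn
    nlinarith
  refine ⟨key, ?_⟩
  have key2 : (Ca - Cb * CX) * ‖z‖ ^ 2 ≤ (1 + CX) * ‖f‖ * ‖z‖ := by nlinarith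
  rcases eq_or_lt_of_le hznn with hz0 | hz0
  · rw [← hz0]
    apply div_nonneg _ (by linarith)
    rcases eq_or_lt_of_le hfnn with hf0 | hf0
    · rw [← hf0]; ring_nf; simp
    · -- ‖f‖ > 0, so there exists v ≠ 0, hence CX ≥ 0
      have hV : ∃ v : V, v ≠ 0 := by
        by_contra h
        push_neg at h
        have : f = 0 := by
          ext v; simp [h v]
        rw [this] at hf0; simp at hf0
      obtain ⟨v, hv⟩ := hV
      have hvpos : (0:ℝ) < ‖v‖ := norm_pos_iff.mpr hv
      have : (0:ℝ) ≤ CX * ‖v‖ := le_trans (norm_nonneg (Φ v)) (hΦnorm v)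
      have hCXnn : 0 ≤ CX := by nlinarith
      positivity
  · rw [le_div_iff₀ (by linarith)]
    have := mul_le_mul_of_nonneg_right key2 (le_of_lt (inv_pos.mpr hz0))
    calc ‖z‖ * (Ca - Cb * CX) = (Ca - Cb * CX) * ‖z‖ ^ 2 * ‖z‖⁻¹ := by
          field_simp
      _ ≤ (1 + CX) * ‖f‖ * ‖z‖ * ‖z‖⁻¹ := this
      _ = (1 + CX) * ‖f‖ := by field_simp
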